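/- Let n, s ∈ ℤ with s ≥ 1, with 4s ≤ n + 1 if n is odd and 4s ≤ n if n is even. Then the difference set V⁴_{n,s} − V⁴_{n,s} is an additive subgroup of ℝ^{n+1} (so V⁴_{n,s} is a translate of a lattice), it contains V²_{n,s} − V²_{n,s} as a subgroup of index 2, and w_{n,s} ∉ V²_{n,s}. In particular, V²_{n,s} is a proper subset of V⁴_{n,s}, so the sublattice affinely generated by the vertices of P(n,s) (namely V²_{n,s}) does not equal V⁴_{n,s}. -/
import Mathlib


open Finset

noncomputable section

/-- The lattice `A_n = {x ∈ ℤ^{n+1} : Σ x_i = 0}`, viewed inside `ℝ^{n+1}`. -/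
def latticeA (n : ℕ) : Set (Fin (n+1) → ℝ) :=
  {x | (∀ i, ∃ m : ℤ, x i = m) ∧ ∑ i, x i = 0}

/-- The point lattice `V_{n,s} = {x ∈ ℤ^{n+1} : Σ x_i = s}`. -/
def Vset (n s : ℕ) : Set (Fin (n+1) → ℝ) :=
  {x | (∀ i, ∃ m : ℤ, x i = m) ∧ ∑ i, x i = (s : ℝ)}

/-- The vertex set `W(n+1,s) = {x ∈ {0,1}^{n+1} : Σ x_i = s}`. -/
def Wset (n s : ℕ) : Set (Fin (n+1) → ℝ) :=
  {x | (∀ i, x i = 0 ∨ x i = 1) ∧ ∑ i, x i = (s : ℝ)}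

/-- The vector `v_{n,s} = ((1/4)^{4s}; 0^{n+1-4s})`. -/
def vns (n s : ℕ) : Fin (n+1) → ℝ := fun i => if (i : ℕ) < 4 * s then 1 / 4 else 0

/-- The vector `t_{n,s} = ((1/2)^{2s}; (−1/2)^{2s}; 0^{n+1-4s})`. -/
def tns (n s : ℕ) : Fin (n+1) → ℝ := fun i =>
  if (i : ℕ) < 2 * s then 1 / 2 else if (i : ℕ) < 4 * s then -(1 / 2) else 0

/-- The point lattice `V²_{n,s} = V_{n,s} ∪ (t_{n,s} + V_{n,s})`. -/
def V2 (n s : ℕ) : Set (Fin (n+1) → ℝ) :=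
  Vset n s ∪ (fun x => tns n s + x) '' Vset n s

/-- The vertex set `S(n,s) = W(n+1,s) ∪ {2v_{n,s} − v : v ∈ W(n+1,s)}`
of the polytope `P(n,s)`. -/
def Sns (n s : ℕ) : Set (Fin (n+1) → ℝ) :=
  Wset n s ∪ (fun v => (2 : ℝ) • vns n s - v) '' Wset n s

/-- The quadratic form `q_{n,s}(x) = 2 Σ_{i<4s} x_i² + Σ_{i≥4s} x_i²`. -/
def qns (n s : ℕ) (x : Fin (n+1) → ℝ) : ℝ :=
  ∑ i : Fin (n+1), (if (i : ℕ) < 4 * s then (2:ℝ) else 1) * (x i) ^ 2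

/-- The standard basis vector `e_1` (1 in coordinate index 1). -/
def e1 (n : ℕ) : Fin (n+1) → ℝ := fun i => if (i : ℕ) = 1 then 1 else 0

/-- For `n` odd, the vector
`w_{n,s} = ((1/4)^{2s}; (−1/4)^{2s}; (1/2)^{n+1−4s}) − ((n+1−4s)/2)·e_1`. -/
def wOdd (n s : ℕ) : Fin (n+1) → ℝ := fun i =>
  (if (i : ℕ) < 2 * s then 1 / 4
   else if (i : ℕ) < 4 * s then -(1 / 4) else 1 / 2)
  - (((n : ℝ) + 1 - 4 * s) / 2) * e1 n i

/-- For `n` even, the vector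
`w_{n,s} = ((1/4)^{2s}; (−1/4)^{2s}; 0; (1/2)^{n−4s}) − ((n−4s)/2)·e_1`. -/
def wEven (n s : ℕ) : Fin (n+1) → ℝ := fun i =>
  (if (i : ℕ) < 2 * s then 1 / 4
   else if (i : ℕ) < 4 * s then -(1 / 4)
   else if (i : ℕ) = 4 * s then 0 else 1 / 2)
  - (((n : ℝ) - 4 * s) / 2) * e1 n i

/-- The vector `w_{n,s}`, defined according to the parity of `n`. -/
def wns (n s : ℕ) : Fin (n+1) → ℝ := if Odd n then wOdd n s else wEven n s

/-- The point lattice `V⁴_{n,s} = V²_{n,s} ∪ (w_{n,s} + V²_{n,s})`. -/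
def V4 (n s : ℕ) : Set (Fin (n+1) → ℝ) :=
  V2 n s ∪ (fun x => wns n s + x) '' V2 n s

/-! ### Auxiliary material -/

namespace V4aux

/-- No integer equals an integer plus a quarter. -/
lemma no_int_add_quarter (a m : ℤ) : ((a : ℝ) + 1/4) ≠ (m : ℝ) := by
  intro h
  have h4 : ((4*a + 1 : ℤ) : ℝ) = ((4*m : ℤ) : ℝ) := by push_cast; linarith
  have : (4*a + 1 : ℤ) = 4*m := by exact_mod_cast h4
  omega

/-- No integer equals an integer minus a quarter. -/
lemma no_int_sub_quarter (a m : ℤ) : ((a : ℝ) - 1/4) ≠ (m : ℝ) := by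
  intro h
  have h4 : ((4*a - 1 : ℤ) : ℝ) = ((4*m : ℤ) : ℝ) := by push_cast; linarith
  have : (4*a - 1 : ℤ) = 4*m := by exact_mod_cast h4
  omega

lemma sum_box (m a b : ℕ) (hab : a ≤ b) (hbm : b ≤ m) (c : ℝ) :
    ∑ i ∈ Finset.range m, (if a ≤ i ∧ i < b then c else 0) = ((b:ℝ) - (a:ℝ)) * c := by
  rw [← Finset.sum_filter]
  have h : (Finset.range m).filter (fun i => a ≤ i ∧ i < b) = Finset.Ico a b := by
    ext j
    simp only [Finset.mem_filter, Finset.mem_range, Finset.mem_Ico]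
    omega
  rw [h, Finset.sum_const, Nat.card_Ico, nsmul_eq_mul, Nat.cast_sub hab]

lemma sum_tns (n s : ℕ) (h : 4*s ≤ n+1) : ∑ i, tns n s i = 0 := by
  have h0 : ∑ i, tns n s i
      = ∑ j ∈ Finset.range (n+1),
        (if j < 2*s then (1:ℝ)/2 else if j < 4*s then -(1/2) else 0) :=
    Fin.sum_univ_eq_sum_range
      (fun j => if j < 2*s then (1:ℝ)/2 else if j < 4*s then -(1/2) else 0) (n+1)
  have h1 : ∀ j ∈ Finset.range (n+1),
      (if j < 2*s then (1:ℝ)/2 else if j < 4*s then -(1/2) else 0)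
      = (if 0 ≤ j ∧ j < 2*s then (1:ℝ)/2 else 0)
        + (if 2*s ≤ j ∧ j < 4*s then -(1/2) else 0) := by
    intro j _
    split_ifs <;> first | ring1 | (exfalso; omega)
  rw [h0, Finset.sum_congr rfl h1, Finset.sum_add_distrib,
    sum_box (n+1) 0 (2*s) (by omega) (by omega),
    sum_box (n+1) (2*s) (4*s) (by omega) (by omega)]
  push_cast; ring

lemma sum_e1 (n : ℕ) (h : 1 ≤ n) : ∑ i, e1 n i = 1 := by
  have h0 : ∑ i, e1 n i
      = ∑ j ∈ Finset.range (n+1), (if j = 1 then (1:ℝ) else 0) :=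
    Fin.sum_univ_eq_sum_range (fun j => if j = 1 then (1:ℝ) else 0) (n+1)
  have h1 : ∀ j ∈ Finset.range (n+1),
      (if j = 1 then (1:ℝ) else 0) = (if 1 ≤ j ∧ j < 2 then (1:ℝ) else 0) := by
    intro j _
    split_ifs <;> first | ring1 | (exfalso; omega)
  rw [h0, Finset.sum_congr rfl h1, sum_box (n+1) 1 2 (by omega) (by omega)]
  norm_num

lemma sum_wOdd (n s : ℕ) (hs : 1 ≤ s) (h : 4*s ≤ n+1) : ∑ i, wOdd n s i = 0 := by
  unfold wOdd
  rw [Finset.sum_sub_distrib, ← Finset.mul_sum, sum_e1 n (by omega), mul_one]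
  have h0 : ∑ i : Fin (n+1),
      (if (i:ℕ) < 2*s then (1:ℝ)/4 else if (i:ℕ) < 4*s then -(1/4) else 1/2)
      = ∑ j ∈ Finset.range (n+1),
        (if j < 2*s then (1:ℝ)/4 else if j < 4*s then -(1/4) else 1/2) :=
    Fin.sum_univ_eq_sum_range
      (fun j => if j < 2*s then (1:ℝ)/4 else if j < 4*s then -(1/4) else 1/2) (n+1)
  have h1 : ∀ j ∈ Finset.range (n+1),
      (if j < 2*s then (1:ℝ)/4 else if j < 4*s then -(1/4) else 1/2)
      = (if 0 ≤ j ∧ j < 2*s then (1:ℝ)/4 else 0)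
        + (if 2*s ≤ j ∧ j < 4*s then -(1/4) else 0)
        + (if 4*s ≤ j ∧ j < n+1 then 1/2 else 0) := by
    intro j hj
    have hj' : j < n+1 := Finset.mem_range.mp hj
    split_ifs <;> first | ring1 | (exfalso; omega)
  rw [h0, Finset.sum_congr rfl h1, Finset.sum_add_distrib, Finset.sum_add_distrib,
    sum_box (n+1) 0 (2*s) (by omega) (by omega),
    sum_box (n+1) (2*s) (4*s) (by omega) (by omega),
    sum_box (n+1) (4*s) (n+1) (by omega) (by omega)]
  push_cast; ring

lemma sum_wEven (n s : ℕ) (hs : 1 ≤ s) (h : 4*s ≤ n) : ∑ i, wEven n s i = 0 := by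
  unfold wEven
  rw [Finset.sum_sub_distrib, ← Finset.mul_sum, sum_e1 n (by omega), mul_one]
  have h0 : ∑ i : Fin (n+1),
      (if (i:ℕ) < 2*s then (1:ℝ)/4 else if (i:ℕ) < 4*s then -(1/4)
       else if (i:ℕ) = 4*s then 0 else 1/2)
      = ∑ j ∈ Finset.range (n+1),
        (if j < 2*s then (1:ℝ)/4 else if j < 4*s then -(1/4)
         else if j = 4*s then 0 else 1/2) :=
    Fin.sum_univ_eq_sum_range
      (fun j => if j < 2*s then (1:ℝ)/4 else if j < 4*s then -(1/4)
        else if j = 4*s then 0 else 1/2) (n+1)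
  have h1 : ∀ j ∈ Finset.range (n+1),
      (if j < 2*s then (1:ℝ)/4 else if j < 4*s then -(1/4)
       else if j = 4*s then 0 else 1/2)
      = (if 0 ≤ j ∧ j < 2*s then (1:ℝ)/4 else 0)
        + (if 2*s ≤ j ∧ j < 4*s then -(1/4) else 0)
        + (if 4*s+1 ≤ j ∧ j < n+1 then 1/2 else 0) := by
    intro j hj
    have hj' : j < n+1 := Finset.mem_range.mp hj
    split_ifs <;> first | ring1 | (exfalso; omega)
  rw [h0, Finset.sum_congr rfl h1, Finset.sum_add_distrib, Finset.sum_add_distrib,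
    sum_box (n+1) 0 (2*s) (by omega) (by omega),
    sum_box (n+1) (2*s) (4*s) (by omega) (by omega),
    sum_box (n+1) (4*s+1) (n+1) (by omega) (by omega)]
  push_cast; ring

lemma sum_wns (n s : ℕ) (hs : 1 ≤ s)
    (hodd : Odd n → 4 * s ≤ n + 1) (heven : Even n → 4 * s ≤ n) :
    ∑ i, wns n s i = 0 := by
  unfold wns
  rcases Nat.even_or_odd n with he | ho
  · rw [if_neg (Nat.not_odd_iff_even.mpr he)]
    exact sum_wEven n s hs (heven he)
  · rw [if_pos ho]
    exact sum_wOdd n s hs (hodd ho)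

/-- `2t` is an integer vector. -/
lemma int_2t (n s : ℕ) (i : Fin (n+1)) : ∃ m : ℤ, tns n s i + tns n s i = (m : ℝ) := by
  unfold tns
  split_ifs
  · exact ⟨1, by norm_num⟩
  · exact ⟨-1, by norm_num⟩
  · exact ⟨0, by norm_num⟩

/-- `2w − t` is an integer vector. -/
lemma int_2w_sub_t (n s : ℕ) (hs : 1 ≤ s) (i : Fin (n+1)) :
    ∃ m : ℤ, (wns n s i + wns n s i) - tns n s i = (m : ℝ) := by
  unfold wns
  rcases Nat.even_or_odd n with he | ho
  · rw [if_neg (Nat.not_odd_iff_even.mpr he)]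
    unfold wEven tns e1
    split_ifs <;>
      first
        | (refine ⟨0, ?_⟩; push_cast; ring1)
        | (refine ⟨1, ?_⟩; push_cast; ring1)
        | (refine ⟨-(n:ℤ) + 4*s, ?_⟩; push_cast; ring1)
        | (exfalso; omega)
  · rw [if_pos ho]
    unfold wOdd tns e1
    split_ifs <;>
      first
        | (refine ⟨0, ?_⟩; push_cast; ring1)
        | (refine ⟨1, ?_⟩; push_cast; ring1)
        | (refine ⟨-((n:ℤ)+1) + 4*s, ?_⟩; push_cast; ring1)
        | (exfalso; omega)

/-- The lattice `A_n` as an additive subgroup. -/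
def Agrp (n : ℕ) : AddSubgroup (Fin (n+1) → ℝ) where
  carrier := {x | (∀ i, ∃ m : ℤ, x i = (m : ℝ)) ∧ ∑ i, x i = 0}
  zero_mem' := ⟨fun i => ⟨0, by simp⟩, by simp⟩
  add_mem' := by
    rintro a b ⟨ha1, ha2⟩ ⟨hb1, hb2⟩
    refine ⟨fun i => ?_, ?_⟩
    · obtain ⟨m, hm⟩ := ha1 i; obtain ⟨k, hk⟩ := hb1 i
      exact ⟨m + k, by simp [Pi.add_apply, hm, hk]⟩
    · simp [Pi.add_apply, Finset.sum_add_distrib, ha2, hb2]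
  neg_mem' := by
    rintro a ⟨ha1, ha2⟩
    refine ⟨fun i => ?_, ?_⟩
    · obtain ⟨m, hm⟩ := ha1 i
      exact ⟨-m, by simp [Pi.neg_apply, hm]⟩
    · simp [Pi.neg_apply, Finset.sum_neg_distrib, ha2]

lemma mem_Agrp (n : ℕ) (x : Fin (n+1) → ℝ) :
    x ∈ Agrp n ↔ (∀ i, ∃ m : ℤ, x i = (m : ℝ)) ∧ ∑ i, x i = 0 := Iff.rfl

/-- The group `G2 = A ∪ (t + A)`. -/
def G2grp (n s : ℕ) (h : tns n s + tns n s ∈ Agrp n) : AddSubgroup (Fin (n+1) → ℝ) where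
  carrier := {x | x ∈ Agrp n ∨ x - tns n s ∈ Agrp n}
  zero_mem' := Or.inl (zero_mem _)
  add_mem' := by
    rintro a b (ha | ha) (hb | hb)
    · exact Or.inl (add_mem ha hb)
    · refine Or.inr ?_
      have e : a + b - tns n s = a + (b - tns n s) := by abel
      rw [e]; exact add_mem ha hb
    · refine Or.inr ?_
      have e : a + b - tns n s = (a - tns n s) + b := by abel
      rw [e]; exact add_mem ha hb
    · refine Or.inl ?_
      have e : a + b = (a - tns n s) + (b - tns n s) + (tns n s + tns n s) := by abel
      rw [e]; exact add_mem (add_mem ha hb) h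
  neg_mem' := by
    rintro a (ha | ha)
    · exact Or.inl (neg_mem ha)
    · refine Or.inr ?_
      have e : -a - tns n s = -(a - tns n s) - (tns n s + tns n s) := by abel
      rw [e]; exact sub_mem (neg_mem ha) h

lemma mem_G2grp (n s : ℕ) (h : tns n s + tns n s ∈ Agrp n) (x : Fin (n+1) → ℝ) :
    x ∈ G2grp n s h ↔ (x ∈ Agrp n ∨ x - tns n s ∈ Agrp n) := Iff.rfl

/-- The group `G4 = G2 ∪ (w + G2)`. -/
def G4grp (n s : ℕ) (h : tns n s + tns n s ∈ Agrp n)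
    (h2 : wns n s + wns n s - tns n s ∈ Agrp n) : AddSubgroup (Fin (n+1) → ℝ) where
  carrier := {x | x ∈ G2grp n s h ∨ x - wns n s ∈ G2grp n s h}
  zero_mem' := Or.inl (zero_mem _)
  add_mem' := by
    have hww : wns n s + wns n s ∈ G2grp n s h := Or.inr h2
    rintro a b (ha | ha) (hb | hb)
    · exact Or.inl (add_mem ha hb)
    · refine Or.inr ?_
      have e : a + b - wns n s = a + (b - wns n s) := by abel
      rw [e]; exact add_mem ha hb
    · refine Or.inr ?_
      have e : a + b - wns n s = (a - wns n s) + b := by abel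
      rw [e]; exact add_mem ha hb
    · refine Or.inl ?_
      have e : a + b = (a - wns n s) + (b - wns n s) + (wns n s + wns n s) := by abel
      rw [e]; exact add_mem (add_mem ha hb) hww
  neg_mem' := by
    have hww : wns n s + wns n s ∈ G2grp n s h := Or.inr h2
    rintro a (ha | ha)
    · exact Or.inl (neg_mem ha)
    · refine Or.inr ?_
      have e : -a - wns n s = -(a - wns n s) - (wns n s + wns n s) := by abel
      rw [e]; exact sub_mem (neg_mem ha) hww

lemma mem_G4grp (n s : ℕ) (h : tns n s + tns n s ∈ Agrp n)
    (h2 : wns n s + wns n s - tns n s ∈ Agrp n) (x : Fin (n+1) → ℝ) :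
    x ∈ G4grp n s h h2 ↔ (x ∈ G2grp n s h ∨ x - wns n s ∈ G2grp n s h) := Iff.rfl

/-- The base point `v0 = s·e_0 ∈ V_{n,s}`. -/
def v0 (n s : ℕ) : Fin (n+1) → ℝ := fun i => if (i : ℕ) = 0 then (s : ℝ) else 0

lemma v0_int (n s : ℕ) (i : Fin (n+1)) : ∃ m : ℤ, v0 n s i = (m : ℝ) := by
  unfold v0; split_ifs
  · exact ⟨s, by push_cast; ring⟩
  · exact ⟨0, by norm_num⟩

lemma v0_sum (n s : ℕ) : ∑ i, v0 n s i = (s : ℝ) := by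
  have h0 : ∑ i, v0 n s i = ∑ j ∈ Finset.range (n+1), (if j = 0 then (s:ℝ) else 0) :=
    Fin.sum_univ_eq_sum_range (fun j => if j = 0 then (s:ℝ) else 0) (n+1)
  have h1 : ∀ j ∈ Finset.range (n+1),
      (if j = 0 then (s:ℝ) else 0) = (if 0 ≤ j ∧ j < 1 then (s:ℝ) else 0) := by
    intro j _
    split_ifs <;> first | ring1 | (exfalso; omega)
  rw [h0, Finset.sum_congr rfl h1, sum_box (n+1) 0 1 (by omega) (by omega)]
  norm_num

lemma mem_Vset_iff (n s : ℕ) (x : Fin (n+1) → ℝ) :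
    x ∈ Vset n s ↔ x - v0 n s ∈ Agrp n := by
  constructor
  · rintro ⟨hint, hsum⟩
    refine ⟨fun i => ?_, ?_⟩
    · obtain ⟨m, hm⟩ := hint i; obtain ⟨k, hk⟩ := v0_int n s i
      exact ⟨m - k, by simp [Pi.sub_apply, hm, hk]⟩
    · simp [Pi.sub_apply, Finset.sum_sub_distrib, hsum, v0_sum]
  · rintro ⟨hint, hsum⟩
    refine ⟨fun i => ?_, ?_⟩
    · obtain ⟨m, hm⟩ := hint i; obtain ⟨k, hk⟩ := v0_int n s i
      refine ⟨m + k, ?_⟩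
      have e : x i = (x - v0 n s) i + v0 n s i := by simp
      rw [e, hm, hk]; push_cast; ring
    · have e : ∑ i, x i = ∑ i, ((x - v0 n s) i + v0 n s i) := by simp
      rw [e, Finset.sum_add_distrib]
      have e2 : ∑ i, (x - v0 n s) i = 0 := hsum
      rw [e2, v0_sum]; ring

lemma mem_V2_iff (n s : ℕ) (h : tns n s + tns n s ∈ Agrp n) (x : Fin (n+1) → ℝ) :
    x ∈ V2 n s ↔ x - v0 n s ∈ G2grp n s h := by
  constructor
  · rintro (hx | ⟨v, hv, rfl⟩)
    · exact Or.inl ((mem_Vset_iff n s x).1 hx)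
    · refine Or.inr ?_
      have e : (tns n s + v) - v0 n s - tns n s = v - v0 n s := by abel
      rw [e]; exact (mem_Vset_iff n s v).1 hv
  · rintro (hx | hx)
    · exact Or.inl ((mem_Vset_iff n s x).2 hx)
    · refine Or.inr ⟨x - tns n s, (mem_Vset_iff n s _).2 ?_, ?_⟩
      swap
      · show tns n s + (x - tns n s) = x
        funext i
        simp
      have e : x - tns n s - v0 n s = x - v0 n s - tns n s := by abel
      rw [e]; exact hx

lemma mem_V4_iff (n s : ℕ) (h : tns n s + tns n s ∈ Agrp n)
    (h2 : wns n s + wns n s - tns n s ∈ Agrp n) (x : Fin (n+1) → ℝ) :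
    x ∈ V4 n s ↔ x - v0 n s ∈ G4grp n s h h2 := by
  constructor
  · rintro (hx | ⟨y, hy, rfl⟩)
    · exact Or.inl ((mem_V2_iff n s h x).1 hx)
    · refine Or.inr ?_
      have e : (wns n s + y) - v0 n s - wns n s = y - v0 n s := by abel
      rw [e]; exact (mem_V2_iff n s h y).1 hy
  · rintro (hx | hx)
    · exact Or.inl ((mem_V2_iff n s h x).2 hx)
    · refine Or.inr ⟨x - wns n s, (mem_V2_iff n s h _).2 ?_, ?_⟩
      swap
      · show wns n s + (x - wns n s) = x
        funext i
        simp
      have e : x - wns n s - v0 n s = x - v0 n s - wns n s := by abel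
      rw [e]; exact hx

lemma diff_eq {n : ℕ} (G : AddSubgroup (Fin (n+1) → ℝ)) (S : Set (Fin (n+1) → ℝ))
    (p : Fin (n+1) → ℝ) (hS : ∀ x, x ∈ S ↔ x - p ∈ G) :
    {x | ∃ u ∈ S, ∃ u' ∈ S, x = u - u'} = (G : Set (Fin (n+1) → ℝ)) := by
  ext x
  constructor
  · rintro ⟨u, hu, u', hu', rfl⟩
    have hm := sub_mem ((hS u).1 hu) ((hS u').1 hu')
    have e : u - u' = (u - p) - (u' - p) := by abel
    rw [e]; exact hm
  · intro hx
    refine ⟨p + x, (hS _).2 ?_, p, (hS _).2 ?_, by abel⟩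
    · have e : p + x - p = x := by abel
      rw [e]; exact hx
    · have e : p - p = (0 : Fin (n+1) → ℝ) := by abel
      rw [e]; exact zero_mem G

/-- Coordinate 0 of `t`. -/
lemma tns_zero (n s : ℕ) (hs : 1 ≤ s) : tns n s 0 = 1/2 := by
  unfold tns
  rw [if_pos]
  simp only [Fin.val_zero]
  omega

/-- Coordinate 0 of `w`. -/
lemma wns_zero (n s : ℕ) (hs : 1 ≤ s) : wns n s 0 = 1/4 := by
  unfold wns wOdd wEven e1
  have h0 : ((0 : Fin (n+1)) : ℕ) = 0 := rfl
  split_ifs <;> simp_all <;> omega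

/-- Coordinate 0 of `v0`. -/
lemma v0_zero (n s : ℕ) : v0 n s 0 = (s : ℝ) := by
  unfold v0
  rw [if_pos]
  rfl

end V4aux


/-- `V⁴_{n,s} − V⁴_{n,s}` is a lattice containing `V²_{n,s} − V²_{n,s}` as a subgroup of
index 2, `w_{n,s} ∉ V²_{n,s}`, and `V²_{n,s}` — the lattice affinely generated by the
vertices of `P(n,s)` — is a proper subset of `V⁴_{n,s}`. -/
theorem V4_extends_V2 (n s : ℕ) (hs : 1 ≤ s)
    (hodd : Odd n → 4 * s ≤ n + 1) (heven : Even n → 4 * s ≤ n) :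
    (∃ G4 G2 : AddSubgroup (Fin (n+1) → ℝ),
      (G4 : Set (Fin (n+1) → ℝ)) = {x | ∃ u ∈ V4 n s, ∃ u' ∈ V4 n s, x = u - u'} ∧
      (G2 : Set (Fin (n+1) → ℝ)) = {x | ∃ u ∈ V2 n s, ∃ u' ∈ V2 n s, x = u - u'} ∧
      G2 ≤ G4 ∧ (G2.addSubgroupOf G4).index = 2) ∧
    wns n s ∉ V2 n s ∧
    V2 n s ⊂ V4 n s := by
  have h4s1 : 4 * s ≤ n + 1 := by
    rcases Nat.even_or_odd n with he | ho
    · have := heven he; omega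
    · exact hodd ho
  have h2t : tns n s + tns n s ∈ V4aux.Agrp n := by
    refine ⟨V4aux.int_2t n s, ?_⟩
    simp only [Pi.add_apply]
    rw [Finset.sum_add_distrib, V4aux.sum_tns n s h4s1]; ring
  have hsw : ∑ i, wns n s i = 0 := V4aux.sum_wns n s hs hodd heven
  have h2w : wns n s + wns n s - tns n s ∈ V4aux.Agrp n := by
    refine ⟨V4aux.int_2w_sub_t n s hs, ?_⟩
    simp only [Pi.sub_apply, Pi.add_apply]
    rw [Finset.sum_sub_distrib, Finset.sum_add_distrib, hsw, V4aux.sum_tns n s h4s1]; ring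
  set G2 := V4aux.G2grp n s h2t with hG2def
  set G4 := V4aux.G4grp n s h2t h2w with hG4def
  have hw0 : wns n s 0 = 1/4 := V4aux.wns_zero n s hs
  have ht0 : tns n s 0 = 1/2 := V4aux.tns_zero n s hs
  have hwG2 : wns n s ∉ G2 := by
    rintro (⟨hint, -⟩ | ⟨hint, -⟩)
    · obtain ⟨m, hm⟩ := hint 0
      rw [hw0] at hm
      exact V4aux.no_int_add_quarter 0 m (by rw [Int.cast_zero, zero_add]; exact hm)
    · obtain ⟨m, hm⟩ := hint 0
      have hh : wns n s 0 - tns n s 0 = (m : ℝ) := hm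
      rw [hw0, ht0] at hh
      refine V4aux.no_int_sub_quarter 0 m ?_
      rw [Int.cast_zero]; linarith
  have hwwG2 : wns n s + wns n s ∈ G2 := Or.inr h2w
  have hwG4 : wns n s ∈ G4 := by
    refine Or.inr ?_
    rw [sub_self]
    exact zero_mem G2
  have hV2iff : ∀ x, x ∈ V2 n s ↔ x - V4aux.v0 n s ∈ G2 := fun x => V4aux.mem_V2_iff n s h2t x
  have hV4iff : ∀ x, x ∈ V4 n s ↔ x - V4aux.v0 n s ∈ G4 :=
    fun x => V4aux.mem_V4_iff n s h2t h2w x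
  refine ⟨⟨G4, G2, (V4aux.diff_eq G4 (V4 n s) _ hV4iff).symm,
      (V4aux.diff_eq G2 (V2 n s) _ hV2iff).symm, ?_, ?_⟩, ?_, ?_⟩
  · intro x hx; exact Or.inl hx
  · rw [AddSubgroup.index_eq_two_iff]
    refine ⟨⟨wns n s, hwG4⟩, ?_⟩
    rintro ⟨x, hx⟩
    simp only [AddSubgroup.mem_addSubgroupOf, AddSubgroup.coe_add]
    by_cases hx2 : x ∈ G2
    · refine Or.inr ⟨hx2, fun hc => ?_⟩
      have h3 := sub_mem hc hx2
      rw [add_sub_cancel_left] at h3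
      exact hwG2 h3
    · have hxw : x - wns n s ∈ G2 := by
        rcases hx with h | h
        · exact absurd h hx2
        · exact h
      refine Or.inl ⟨?_, hx2⟩
      have e : x + wns n s = (x - wns n s) + (wns n s + wns n s) := by abel
      rw [e]; exact add_mem hxw hwwG2
  · rintro (⟨hint, -⟩ | ⟨v, ⟨hint, -⟩, hv⟩)
    · obtain ⟨m, hm⟩ := hint 0
      rw [hw0] at hm
      exact V4aux.no_int_add_quarter 0 m (by rw [Int.cast_zero, zero_add]; exact hm)
    · obtain ⟨m, hm⟩ := hint 0
      have hv0 : tns n s 0 + v 0 = wns n s 0 := congrFun hv 0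
      rw [ht0, hw0] at hv0
      refine V4aux.no_int_sub_quarter 0 m ?_
      rw [Int.cast_zero]
      linarith [hm]
  · constructor
    · intro x hx; exact Or.inl hx
    · intro hsub
      have hv0mem : V4aux.v0 n s ∈ Vset n s := ⟨V4aux.v0_int n s, V4aux.v0_sum n s⟩
      have hmem4 : wns n s + V4aux.v0 n s ∈ V4 n s :=
        Or.inr ⟨V4aux.v0 n s, Or.inl hv0mem, rfl⟩
      have hmem2 := hsub hmem4
      have hval : (wns n s + V4aux.v0 n s) 0 = (s : ℝ) + 1/4 := by
        have e : (wns n s + V4aux.v0 n s) 0 = wns n s 0 + V4aux.v0 n s 0 := rfl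
        rw [e, hw0, V4aux.v0_zero]; ring
      rcases hmem2 with ⟨hint, -⟩ | ⟨v, ⟨hint, -⟩, hv⟩
      · obtain ⟨m, hm⟩ := hint 0
        rw [hval] at hm
        refine V4aux.no_int_add_quarter (s : ℤ) m ?_
        push_cast
        linarith
      · obtain ⟨m, hm⟩ := hint 0
        have hv0' : tns n s 0 + v 0 = (wns n s + V4aux.v0 n s) 0 := congrFun hv 0
        rw [hval, ht0] at hv0'
        refine V4aux.no_int_sub_quarter (s : ℤ) m ?_
        push_cast
        linarith
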